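/- Let x₀ be a unit dual quaternion (star x₀ * x₀ = 1) and v a skew-adjoint dual quaternion (star v = -v), and suppose the two key poses lie on the one-parameter screw motion through x₀ along v, i.e. x₁ = x₀ * exp(a • v) and x₂ = x₀ * exp(b • v) for some a, b ∈ ℝ. Then (i) star x₁ * x₂ = exp((b - a) • v), and (ii) every ScLERP interpolant between x₁ and x₂ stays on the same one-parameter screw motion: for all τ ∈ ℝ, x₁ * exp((τ * (b - a)) • v) = x₀ * exp((a + τ * (b - a)) • v). Hence if both boundary poses satisfy a geometric constraint given by membership in the coset {x₀ * exp(s • v) : s ∈ ℝ}, so does the entire interpolated motion. -/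

import Mathlib

open Quaternion

/-- Componentwise star (quaternion conjugation on primary and dual parts)
on the dual quaternions `DualNumber ℍ[ℝ]`. -/
noncomputable instance : Star (DualNumber ℍ[ℝ]) :=
  ⟨fun x => TrivSqZeroExt.inl (star x.fst) + TrivSqZeroExt.inr (star x.snd)⟩

@[simp] theorem DualQuaternion.fst_star (x : DualNumber ℍ[ℝ]) :
    (star x).fst = star x.fst := by
  show (TrivSqZeroExt.inl (star x.fst) + TrivSqZeroExt.inr (star x.snd)).fst = _
  simp

@[simp] theorem DualQuaternion.snd_star (x : DualNumber ℍ[ℝ]) :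
    (star x).snd = star x.snd := by
  show (TrivSqZeroExt.inl (star x.fst) + TrivSqZeroExt.inr (star x.snd)).snd = _
  simp

noncomputable instance : StarRing (DualNumber ℍ[ℝ]) where
  star_involutive x := TrivSqZeroExt.ext (by simp) (by simp)
  star_mul x y := TrivSqZeroExt.ext (by simp [TrivSqZeroExt.fst_mul])
    (by
      simp [TrivSqZeroExt.snd_mul, MulOpposite.smul_eq_mul_unop, smul_eq_mul]
      abel)
  star_add x y := TrivSqZeroExt.ext (by simp) (by simp)

set_option maxHeartbeats 1000000 in
noncomputable instance : ContinuousStar (DualNumber ℍ[ℝ]) :=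
  ⟨by
    have : (star : DualNumber ℍ[ℝ] → DualNumber ℍ[ℝ]) = fun x =>
        TrivSqZeroExt.inl (star x.fst) + TrivSqZeroExt.inr (star x.snd) := rfl
    rw [this]
    exact ((TrivSqZeroExt.continuous_inl.comp
      (continuous_star.comp TrivSqZeroExt.continuous_fst)).add
      (TrivSqZeroExt.continuous_inr.comp
        (continuous_star.comp (TrivSqZeroExt.continuous_snd (R := ℍ[ℝ])))))⟩

set_option maxHeartbeats 1000000 in
/-- **ScLERP preserves one-parameter screw-motion constraints.**  If the key poses
`x₁ = x₀ * exp (a • v)` and `x₂ = x₀ * exp (b • v)` lie on the one-parameter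
screw motion through the unit dual quaternion `x₀` along the skew-adjoint twist
`v`, then `star x₁ * x₂ = exp ((b - a) • v)`, every ScLERP interpolant stays on
the same screw motion, and hence every interpolant belongs to the coset
`{x₀ * exp (s • v) : s ∈ ℝ}`. -/
theorem sclerp_preserves_screw_motion_constraint (x₀ v : DualNumber ℍ[ℝ]) (a b : ℝ)
    (hx₀ : star x₀ * x₀ = 1) (hv : star v = -v)
    (x₁ x₂ : DualNumber ℍ[ℝ])
    (hx₁ : x₁ = x₀ * NormedSpace.exp (a • v))
    (hx₂ : x₂ = x₀ * NormedSpace.exp (b • v)) :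
    star x₁ * x₂ = NormedSpace.exp ((b - a) • v) ∧
    (∀ τ : ℝ, x₁ * NormedSpace.exp ((τ * (b - a)) • v) =
      x₀ * NormedSpace.exp ((a + τ * (b - a)) • v)) ∧
    (∀ τ : ℝ, x₁ * NormedSpace.exp ((τ * (b - a)) • v) ∈
      {y : DualNumber ℍ[ℝ] | ∃ s : ℝ, y = x₀ * NormedSpace.exp (s • v)}) := by

  subst hx₁ hx₂
  letI : NormedAlgebra ℚ (DualNumber ℍ[ℝ]) := NormedAlgebra.restrictScalars ℚ ℝ _
  have hcomm : ∀ s t : ℝ, Commute (s • v) (t • v) := fun s t =>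
      TrivSqZeroExt.ext
        (by simp [Commute, SemiconjBy, TrivSqZeroExt.fst_mul, smul_mul_smul_comm, mul_comm s t, smul_comm t s])
        (by
          simp [Commute, SemiconjBy, TrivSqZeroExt.snd_mul, MulOpposite.smul_eq_mul_unop,
            smul_eq_mul, smul_mul_smul_comm, mul_comm s t]
          rw [smul_comm t s, smul_comm t s])
  have hmul : ∀ s t : ℝ,
      NormedSpace.exp (s • v) * NormedSpace.exp (t • v)
        = NormedSpace.exp ((s + t) • v) := fun s t => by
    rw [← NormedSpace.exp_add_of_commute (hcomm s t), ← add_smul]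
  have h1 : star v.fst = -v.fst := by simpa using congrArg TrivSqZeroExt.fst hv
  have h2 : star v.snd = -v.snd := by simpa using congrArg TrivSqZeroExt.snd hv
  have hsv : ∀ s : ℝ, star (s • v) = (-s) • v := fun s =>
    TrivSqZeroExt.ext (by simp [Quaternion.star_smul, h1])
      (by simp [Quaternion.star_smul, h2])
  have hstar : ∀ s : ℝ, star (NormedSpace.exp (s • v))
      = NormedSpace.exp ((-s) • v) := fun s => by
    rw [NormedSpace.star_exp, hsv]
  have key : star (x₀ * NormedSpace.exp (a • v)) * (x₀ * NormedSpace.exp (b • v))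
      = NormedSpace.exp ((b - a) • v) := by
    rw [star_mul, hstar, mul_assoc, ← mul_assoc (star x₀), hx₀, one_mul, hmul]
    ring_nf
  refine ⟨key, ?_, ?_⟩
  · intro τ
    rw [mul_assoc, hmul]
  · intro τ
    exact ⟨a + τ * (b - a), by rw [mul_assoc, hmul]⟩
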